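/- arXiv:1108.2676 — 2 statements merged into one kernel-verified Lean document; each statement's English description precedes it below -/
import Mathlib

section
/- For every n ≥ 3 and every d ≥ 2 there exists a reduced homaloidal hypersurface in P^n of degree d (i.e., a reduced hypersurface whose polar map is birational). -/
open MvPolynomial
open scoped LinearAlgebra.Projectivization

/-- The gradient (polar map on the level of vectors) of `f`. -/
noncomputable def polarMapVec {n : ℕ} (f : MvPolynomial (Fin (n+1)) ℂ)
    (v : Fin (n+1) → ℂ) : Fin (n+1) → ℂ :=
  fun i => eval v (pderiv i f)

/-- `f` has polar degree `d` : the fiber of the polar map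
`ℙⁿ ⇢ ℙⁿ`, `x ↦ (∂f/∂x₀ : ⋯ : ∂f/∂xₙ)` over a generic point has exactly `d` points. -/
def HasPolarDegree {n : ℕ} (f : MvPolynomial (Fin (n+1)) ℂ) (d : ℕ) : Prop :=
  ∃ U : Set (Fin (n+1) → ℂ), Dense U ∧ ∀ y ∈ U, y ≠ 0 →
    Nat.card {x : ℙ ℂ (Fin (n+1) → ℂ) | ∃ v : Fin (n+1) → ℂ, ∃ hv : v ≠ 0,
      Projectivization.mk ℂ v hv = x ∧ ∃ c : ℂ, c ≠ 0 ∧ polarMapVec f v = c • y} = d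

/-- The zero locus in `ℙⁿ` of a homogeneous polynomial. -/
def projZeroLocus {n : ℕ} (f : MvPolynomial (Fin (n+1)) ℂ) :
    Set (ℙ ℂ (Fin (n+1) → ℂ)) :=
  {x | eval x.rep f = 0}

namespace Hom8

noncomputable section

variable (m e : ℕ)

abbrev I0 : Fin (m+3+1) := ⟨0, by omega⟩
abbrev I1 : Fin (m+3+1) := ⟨1, by omega⟩
abbrev IN1 : Fin (m+3+1) := ⟨m+2, by omega⟩
abbrev IN : Fin (m+3+1) := ⟨m+3, by omega⟩

def Mid : Finset (Fin (m+3+1)) := Finset.univ.filter fun i => 2 ≤ i.1 ∧ i.1 ≤ m+1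

/-- Our homaloidal polynomial of degree `e+2` in `ℙ^(m+3)`. -/
def F : MvPolynomial (Fin (m+3+1)) ℂ :=
  X (IN m) * X (I0 m) ^ (e+1) + X (I1 m) ^ (e+2)
    + X (I0 m) ^ e * (X (I1 m) * X (IN1 m) + ∑ i ∈ Mid m, X i ^ 2)

lemma I0_not_mid : I0 m ∉ Mid m := by simp [Mid]
lemma I1_not_mid : I1 m ∉ Mid m := by simp [Mid]
lemma IN1_not_mid : IN1 m ∉ Mid m := by simp [Mid]
lemma IN_not_mid : IN m ∉ Mid m := by simp [Mid]

lemma pderiv_sum_sq (j : Fin (m+3+1)) :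
    pderiv j (∑ i ∈ Mid m, X i ^ 2 : MvPolynomial (Fin (m+3+1)) ℂ)
      = if j ∈ Mid m then 2 * X j else 0 := by
  rw [map_sum]
  have h : ∀ i ∈ Mid m, pderiv j (X i ^ 2 : MvPolynomial (Fin (m+3+1)) ℂ)
      = if j = i then 2 * X i else 0 := by
    intro i _
    by_cases h : j = i
    · subst h; simp [pderiv_pow]
    · simp [pderiv_pow, pderiv_X_of_ne (Ne.symm h), h]
  rw [Finset.sum_congr rfl h, Finset.sum_ite_eq]

lemma pderiv_F_IN : pderiv (IN m) (F m e) = X (I0 m) ^ (e+1) := by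
  have h0 : I0 m ≠ IN m := Fin.ne_of_val_ne (show 0 ≠ m+3 by omega)
  have h1 : I1 m ≠ IN m := Fin.ne_of_val_ne (show 1 ≠ m+3 by omega)
  have h2 : IN1 m ≠ IN m := Fin.ne_of_val_ne (show m+2 ≠ m+3 by omega)
  have hM := IN_not_mid m
  simp only [F, map_add, pderiv_mul, pderiv_pow, pderiv_sum_sq, pderiv_X_self,
    pderiv_X_of_ne h0, pderiv_X_of_ne h1, pderiv_X_of_ne h2, hM, if_false,
    mul_zero, zero_mul, add_zero, zero_add, mul_one, one_mul]

lemma G3 (w : Fin (m+3+1) → ℂ) :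
    polarMapVec (F m e) w (IN m) = w (I0 m) ^ (e+1) := by
  show eval w (pderiv (IN m) (F m e)) = _
  rw [pderiv_F_IN]
  simp

lemma G2 (w : Fin (m+3+1) → ℂ) :
    polarMapVec (F m e) w (IN1 m) = w (I0 m) ^ e * w (I1 m) := by
  show eval w (pderiv (IN1 m) (F m e)) = _
  have h0 : I0 m ≠ IN1 m := Fin.ne_of_val_ne (show 0 ≠ m+2 by omega)
  have h1 : I1 m ≠ IN1 m := Fin.ne_of_val_ne (show 1 ≠ m+2 by omega)
  have h2 : IN m ≠ IN1 m := Fin.ne_of_val_ne (show m+3 ≠ m+2 by omega)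
  have hM := IN1_not_mid m
  simp only [F, map_add, pderiv_mul, pderiv_pow, pderiv_sum_sq, pderiv_X_self,
    pderiv_X_of_ne h0, pderiv_X_of_ne h1, pderiv_X_of_ne h2, hM, if_false,
    mul_zero, zero_mul, add_zero, zero_add, mul_one]
  simp

lemma G1 (w : Fin (m+3+1) → ℂ) :
    polarMapVec (F m e) w (I1 m)
      = ((e+2 : ℕ) : ℂ) * w (I1 m) ^ (e+1) + w (I0 m) ^ e * w (IN1 m) := by
  show eval w (pderiv (I1 m) (F m e)) = _
  have h0 : I0 m ≠ I1 m := Fin.ne_of_val_ne (show 0 ≠ 1 by omega)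
  have h2 : IN1 m ≠ I1 m := Fin.ne_of_val_ne (show m+2 ≠ 1 by omega)
  have h3 : IN m ≠ I1 m := Fin.ne_of_val_ne (show m+3 ≠ 1 by omega)
  have hM := I1_not_mid m
  have he : e + 2 - 1 = e + 1 := rfl
  simp only [F, map_add, pderiv_mul, pderiv_pow, pderiv_sum_sq, pderiv_X_self,
    pderiv_X_of_ne h0, pderiv_X_of_ne h2, pderiv_X_of_ne h3, hM, if_false, he,
    mul_zero, zero_mul, add_zero, zero_add, mul_one]
  simp

lemma GM (w : Fin (m+3+1) → ℂ) (j : Fin (m+3+1)) (hj : j ∈ Mid m) :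
    polarMapVec (F m e) w j = w (I0 m) ^ e * (2 * w j) := by
  show eval w (pderiv j (F m e)) = _
  have hb : 2 ≤ j.1 ∧ j.1 ≤ m+1 := by simpa [Mid] using hj
  have h0 : I0 m ≠ j := Fin.ne_of_val_ne (show 0 ≠ j.1 by omega)
  have h1 : I1 m ≠ j := Fin.ne_of_val_ne (show 1 ≠ j.1 by omega)
  have h2 : IN1 m ≠ j := Fin.ne_of_val_ne (show m+2 ≠ j.1 by omega)
  have h3 : IN m ≠ j := Fin.ne_of_val_ne (show m+3 ≠ j.1 by omega)
  simp only [F, map_add, pderiv_mul, pderiv_pow, pderiv_sum_sq, pderiv_X_self,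
    pderiv_X_of_ne h0, pderiv_X_of_ne h1, pderiv_X_of_ne h2, pderiv_X_of_ne h3,
    hj, if_true, mul_zero, zero_mul, add_zero, zero_add, mul_one]
  simp

lemma G0 (w : Fin (m+3+1) → ℂ) :
    polarMapVec (F m e) w (I0 m)
      = ((e+1 : ℕ) : ℂ) * w (IN m) * w (I0 m) ^ e
        + (e : ℂ) * w (I0 m) ^ (e-1)
          * (w (I1 m) * w (IN1 m) + ∑ i ∈ Mid m, w i ^ 2) := by
  show eval w (pderiv (I0 m) (F m e)) = _
  have h1 : I1 m ≠ I0 m := Fin.ne_of_val_ne (show 1 ≠ 0 by omega)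
  have h2 : IN1 m ≠ I0 m := Fin.ne_of_val_ne (show m+2 ≠ 0 by omega)
  have h3 : IN m ≠ I0 m := Fin.ne_of_val_ne (show m+3 ≠ 0 by omega)
  have hM := I0_not_mid m
  have he : e + 1 - 1 = e := rfl
  simp only [F, map_add, pderiv_mul, pderiv_pow, pderiv_sum_sq, pderiv_X_self,
    pderiv_X_of_ne h1, pderiv_X_of_ne h2, pderiv_X_of_ne h3, hM, if_false, he,
    mul_zero, zero_mul, add_zero, zero_add, mul_one]
  simp
  ring

/-! ### The explicit inverse of the polar map -/

def cc0 (y : Fin (m+3+1) → ℂ) : ℂ := (y (IN m))⁻¹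

def q1 (y : Fin (m+3+1) → ℂ) : ℂ := cc0 m y * y (IN1 m)

def qN1 (y : Fin (m+3+1) → ℂ) : ℂ :=
  cc0 m y * y (I1 m) - ((e+2 : ℕ) : ℂ) * q1 m y ^ (e+1)

def S0 (y : Fin (m+3+1) → ℂ) : ℂ := ∑ i ∈ Mid m, (cc0 m y * y i / 2) ^ 2

def Qs (y : Fin (m+3+1) → ℂ) : ℂ := q1 m y * qN1 m e y + S0 m y

def qN (y : Fin (m+3+1) → ℂ) : ℂ :=
  (((e+1 : ℕ) : ℂ))⁻¹ * (cc0 m y * y (I0 m) - (e : ℂ) * Qs m e y)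

/-- The unique (up to scale) preimage of `y` under the polar map. -/
def sol (y : Fin (m+3+1) → ℂ) : Fin (m+3+1) → ℂ := fun j =>
  if j.1 = 0 then 1
  else if j.1 = 1 then q1 m y
  else if j.1 = m+2 then qN1 m e y
  else if j.1 = m+3 then qN m e y
  else cc0 m y * y j / 2

variable {m e}

lemma sol_I0 (y : Fin (m+3+1) → ℂ) : sol m e y (I0 m) = 1 := by
  unfold sol; rw [if_pos rfl]

lemma sol_I1 (y : Fin (m+3+1) → ℂ) : sol m e y (I1 m) = q1 m y := by
  unfold sol
  rw [if_neg (show ¬((I1 m).1 = 0) by simp), if_pos rfl]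

lemma sol_IN1 (y : Fin (m+3+1) → ℂ) : sol m e y (IN1 m) = qN1 m e y := by
  unfold sol
  rw [if_neg (show ¬((IN1 m).1 = 0) by simp), if_neg (show ¬((IN1 m).1 = 1) by simp),
    if_pos rfl]

lemma sol_IN (y : Fin (m+3+1) → ℂ) : sol m e y (IN m) = qN m e y := by
  unfold sol
  rw [if_neg (show ¬((IN m).1 = 0) by simp), if_neg (show ¬((IN m).1 = 1) by simp),
    if_neg (show ¬((IN m).1 = m+2) by simp), if_pos rfl]

lemma sol_mid (y : Fin (m+3+1) → ℂ) {j : Fin (m+3+1)} (hj : j ∈ Mid m) :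
    sol m e y j = cc0 m y * y j / 2 := by
  have hb : 2 ≤ j.1 ∧ j.1 ≤ m+1 := by simpa [Mid] using hj
  unfold sol
  rw [if_neg (by omega), if_neg (by omega), if_neg (by omega), if_neg (by omega)]

lemma sol_ne_zero (y : Fin (m+3+1) → ℂ) : sol m e y ≠ 0 := fun h => by
  have := congrFun h (I0 m)
  rw [sol_I0] at this
  exact one_ne_zero this

lemma sum_sol_sq (y : Fin (m+3+1) → ℂ) :
    ∑ i ∈ Mid m, sol m e y i ^ 2 = S0 m y := by
  unfold S0
  exact Finset.sum_congr rfl fun i hi => by rw [sol_mid y hi]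

lemma he1 : ((e+1 : ℕ) : ℂ) ≠ 0 := Nat.cast_ne_zero.mpr (by omega)

/-- Existence: `sol y` is mapped to `cc0 y • y` by the polar map. -/
lemma grad_sol (y : Fin (m+3+1) → ℂ) (hy : y (IN m) ≠ 0) :
    polarMapVec (F m e) (sol m e y) = cc0 m y • y := by
  funext j
  have hcc : cc0 m y * y (IN m) = 1 := inv_mul_cancel₀ hy
  by_cases h3 : j = IN m
  · subst h3
    rw [G3, sol_I0, one_pow, Pi.smul_apply, smul_eq_mul, hcc]
  by_cases h2 : j = IN1 m
  · subst h2
    rw [G2, sol_I0, sol_I1, one_pow, one_mul, Pi.smul_apply, smul_eq_mul, q1]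
  by_cases h1 : j = I1 m
  · subst h1
    rw [G1, sol_I0, sol_I1, sol_IN1, one_pow, one_mul, Pi.smul_apply, smul_eq_mul, qN1]
    ring
  by_cases h0 : j = I0 m
  · subst h0
    rw [G0, sol_I0, sol_I1, sol_IN1, sol_IN, sum_sol_sq, one_pow, one_pow,
      Pi.smul_apply, smul_eq_mul]
    simp only [qN, Qs]
    have h1e : ((e : ℂ) + 1) ≠ 0 := by
      have h := he1 (e := e); push_cast at h; exact h
    field_simp [h1e]
    ring
  · have hj : j ∈ Mid m := by
      simp only [Mid, Finset.mem_filter, Finset.mem_univ, true_and]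
      have b0 : j.1 ≠ 0 := fun h => h0 (Fin.ext h)
      have b1 : j.1 ≠ 1 := fun h => h1 (Fin.ext h)
      have b2 : j.1 ≠ m+2 := fun h => h2 (Fin.ext h)
      have b3 : j.1 ≠ m+3 := fun h => h3 (Fin.ext h)
      omega
    rw [GM _ _ _ _ hj, sol_I0, one_pow, one_mul, sol_mid y hj, Pi.smul_apply, smul_eq_mul]
    ring

/-- Uniqueness: any preimage of a multiple of `y` is a multiple of `sol y`. -/
lemma sol_unique (y v : Fin (m+3+1) → ℂ) (hy : y (IN m) ≠ 0) (cc : ℂ) (hcc : cc ≠ 0)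
    (h : polarMapVec (F m e) v = cc • y) :
    v (I0 m) ≠ 0 ∧ v = v (I0 m) • sol m e y := by
  have h3 := congrFun h (IN m)
  rw [G3, Pi.smul_apply, smul_eq_mul] at h3
  have ht : v (I0 m) ≠ 0 := by
    intro h0
    rw [h0, zero_pow (Nat.succ_ne_zero e)] at h3
    exact (mul_ne_zero hcc hy) h3.symm
  have hcc' : cc = v (I0 m) ^ (e+1) * cc0 m y := by
    rw [cc0, h3, mul_assoc, mul_inv_cancel₀ hy, mul_one]
  have h2 := congrFun h (IN1 m)
  rw [G2, Pi.smul_apply, smul_eq_mul, hcc'] at h2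
  have hv1 : v (I1 m) = v (I0 m) * q1 m y := by
    apply mul_left_cancel₀ (pow_ne_zero e ht)
    rw [h2, q1]
    ring
  have h1 := congrFun h (I1 m)
  rw [G1, Pi.smul_apply, smul_eq_mul, hcc', hv1] at h1
  have hqN1 : qN1 m e y = cc0 m y * y (I1 m) - ((e+2 : ℕ) : ℂ) * q1 m y ^ (e+1) := rfl
  have hvN1 : v (IN1 m) = v (I0 m) * qN1 m e y := by
    apply mul_left_cancel₀ (pow_ne_zero e ht)
    linear_combination h1 - (v (I0 m)) ^ (e+1) * hqN1
  have hmid : ∀ j ∈ Mid m, v j = v (I0 m) * (cc0 m y * y j / 2) := by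
    intro j hj
    have hj' := congrFun h j
    rw [GM _ _ _ _ hj, Pi.smul_apply, smul_eq_mul, hcc'] at hj'
    apply mul_left_cancel₀ (mul_ne_zero (pow_ne_zero e ht) (two_ne_zero (α := ℂ)))
    linear_combination hj'
  have hsum : ∑ i ∈ Mid m, v i ^ 2 = (v (I0 m)) ^ 2 * S0 m y := by
    rw [S0, Finset.mul_sum]
    exact Finset.sum_congr rfl fun i hi => by rw [hmid i hi]; ring
  have h0 := congrFun h (I0 m)
  rw [G0, Pi.smul_apply, smul_eq_mul, hcc', hv1, hvN1, hsum] at h0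
  have het : (e : ℂ) * (v (I0 m)) ^ (e-1) * (v (I0 m)) ^ 2
      = (e : ℂ) * (v (I0 m)) ^ (e+1) := by
    rcases e with _ | k
    · simp
    · have hk : k+1-1 = k := rfl
      rw [hk]
      push_cast
      ring
  have hqN' : ((e+1 : ℕ) : ℂ) * qN m e y = cc0 m y * y (I0 m) - (e : ℂ) * Qs m e y := by
    rw [qN, ← mul_assoc, mul_inv_cancel₀ he1, one_mul]
  have hQ : Qs m e y = q1 m y * qN1 m e y + S0 m y := rfl
  have hvN : v (IN m) = v (I0 m) * qN m e y := by
    apply mul_left_cancel₀ (mul_ne_zero (he1 (e := e)) (pow_ne_zero e ht))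
    linear_combination h0 - (v (I0 m)) ^ (e+1) * hqN'
      - (q1 m y * qN1 m e y + S0 m y) * het + (e : ℂ) * (v (I0 m)) ^ (e+1) * hQ
  refine ⟨ht, ?_⟩
  funext j
  rw [Pi.smul_apply, smul_eq_mul]
  by_cases c3 : j = IN m
  · subst c3; rw [sol_IN]; exact hvN
  by_cases c2 : j = IN1 m
  · subst c2; rw [sol_IN1]; exact hvN1
  by_cases c1 : j = I1 m
  · subst c1; rw [sol_I1]; exact hv1
  by_cases c0 : j = I0 m
  · subst c0; rw [sol_I0, mul_one]
  · have hj : j ∈ Mid m := by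
      simp only [Mid, Finset.mem_filter, Finset.mem_univ, true_and]
      have b0 : j.1 ≠ 0 := fun hh => c0 (Fin.ext hh)
      have b1 : j.1 ≠ 1 := fun hh => c1 (Fin.ext hh)
      have b2 : j.1 ≠ m+2 := fun hh => c2 (Fin.ext hh)
      have b3 : j.1 ≠ m+3 := fun hh => c3 (Fin.ext hh)
      omega
    rw [sol_mid y hj]
    exact hmid j hj

/-! ### density, homogeneity, squarefreeness -/

lemma dense_U : Dense {y : Fin (m+3+1) → ℂ | y (IN m) ≠ 0} := by
  rw [Metric.dense_iff]
  intro x r hr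
  by_cases hx : x (IN m) ≠ 0
  · exact ⟨x, Metric.mem_ball_self hr, hx⟩
  · push_neg at hx
    refine ⟨Function.update x (IN m) ((r/2 : ℝ) : ℂ), ?_, ?_⟩
    · rw [Metric.mem_ball, dist_pi_lt_iff hr]
      intro b
      by_cases hb : b = IN m
      · subst hb
        rw [Function.update_self, hx, dist_zero_right, Complex.norm_real,
          Real.norm_eq_abs, abs_of_pos (by linarith)]
        linarith
      · rw [Function.update_of_ne hb, dist_self]; exact hr
    · show Function.update x (IN m) _ (IN m) ≠ 0
      rw [Function.update_self]
      exact Complex.ofReal_ne_zero.mpr (by positivity)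

lemma F_homog : (F m e).IsHomogeneous (e+2) := by
  have hA : (X (IN m) * X (I0 m) ^ (e+1) : MvPolynomial (Fin (m+3+1)) ℂ).IsHomogeneous
      (1+(e+1)) := (isHomogeneous_X _ _).mul (isHomogeneous_X_pow _ _)
  have hB : (X (I1 m) ^ (e+2) : MvPolynomial (Fin (m+3+1)) ℂ).IsHomogeneous (e+2) :=
    isHomogeneous_X_pow _ _
  have hD : ((X (I1 m) * X (IN1 m) + ∑ i ∈ Mid m, X i ^ 2 :
      MvPolynomial (Fin (m+3+1)) ℂ)).IsHomogeneous 2 := by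
    apply MvPolynomial.IsHomogeneous.add
    · simpa using (isHomogeneous_X ℂ (I1 m)).mul (isHomogeneous_X ℂ (IN1 m))
    · exact MvPolynomial.IsHomogeneous.sum _ _ _ fun i _ => isHomogeneous_X_pow _ _
  have hC : (X (I0 m) ^ e * (X (I1 m) * X (IN1 m) + ∑ i ∈ Mid m, X i ^ 2) :
      MvPolynomial (Fin (m+3+1)) ℂ).IsHomogeneous (e+2) :=
    (isHomogeneous_X_pow _ _).mul hD
  have h12 : 1 + (e+1) = e+2 := by omega
  rw [h12] at hA
  exact (hA.add hB).add hC

lemma eval_single_F : eval (Pi.single (I1 m) 1 : Fin (m+3+1) → ℂ) (F m e) = 1 := by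
  have h0 : (Pi.single (I1 m) 1 : Fin (m+3+1) → ℂ) (I0 m) = 0 :=
    Pi.single_eq_of_ne (Fin.ne_of_val_ne (show (0:ℕ) ≠ 1 by omega)) 1
  have hN : (Pi.single (I1 m) 1 : Fin (m+3+1) → ℂ) (IN m) = 0 :=
    Pi.single_eq_of_ne (Fin.ne_of_val_ne (show m+3 ≠ 1 by omega)) 1
  have hN1 : (Pi.single (I1 m) 1 : Fin (m+3+1) → ℂ) (IN1 m) = 0 :=
    Pi.single_eq_of_ne (Fin.ne_of_val_ne (show m+2 ≠ 1 by omega)) 1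
  have h1 : (Pi.single (I1 m) 1 : Fin (m+3+1) → ℂ) (I1 m) = 1 := Pi.single_eq_same _ _
  have hs : ∑ i ∈ Mid m, ((Pi.single (I1 m) 1 : Fin (m+3+1) → ℂ) i) ^ 2 = 0 := by
    apply Finset.sum_eq_zero
    intro i hi
    have hb : 2 ≤ i.1 ∧ i.1 ≤ m+1 := by simpa [Mid] using hi
    have : (Pi.single (I1 m) 1 : Fin (m+3+1) → ℂ) i = 0 :=
      Pi.single_eq_of_ne (Fin.ne_of_val_ne (show i.1 ≠ 1 by omega)) 1
    rw [this]
    norm_num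
  simp only [F, eval_add, eval_mul, eval_pow, eval_X, map_sum]
  rw [h0, hN, hN1, h1, hs]
  norm_num

lemma F_squarefree : Squarefree (F m e) := by
  intro g hg
  by_contra hng
  have hF1 : eval (Pi.single (I1 m) 1 : Fin (m+3+1) → ℂ) (F m e) = 1 := eval_single_F
  have hF0 : F m e ≠ 0 := fun hh => by rw [hh] at hF1; simp at hF1
  have hg0 : g ≠ 0 := by
    rintro rfl
    exact hF0 (zero_dvd_iff.mp (by simpa using hg))
  obtain ⟨p, hpirr, hpg⟩ := WfDvdMonoid.exists_irreducible_factor hng hg0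
  have hpprime : Prime p := UniqueFactorizationMonoid.irreducible_iff_prime.mp hpirr
  obtain ⟨k, hk⟩ := hg
  have hgd : g ∣ pderiv (IN m) (F m e) := by
    refine ⟨pderiv (IN m) g * k + pderiv (IN m) g * k + g * pderiv (IN m) k, ?_⟩
    rw [hk, pderiv_mul, pderiv_mul]
    ring
  rw [pderiv_F_IN] at hgd
  have hpX : p ∣ X (I0 m) := hpprime.dvd_of_dvd_pow (dvd_trans hpg hgd)
  have hXprime : Prime (X (I0 m) : MvPolynomial (Fin (m+3+1)) ℂ) := by
    have h0 : (I0 m) = (0 : Fin (m+3+1)) := by apply Fin.ext; simp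
    rw [h0, ← MulEquiv.prime_iff (finSuccEquiv ℂ (m+3)).toMulEquiv]
    have hX : (finSuccEquiv ℂ (m+3)).toMulEquiv (X 0) = Polynomial.X := by
      simpa using finSuccEquiv_X_zero (R := ℂ) (n := m+3)
    rw [hX]
    exact Polynomial.prime_X
  have hXF : (X (I0 m) : MvPolynomial (Fin (m+3+1)) ℂ) ∣ F m e :=
    dvd_trans (hpirr.dvd_symm hXprime.irreducible hpX)
      (dvd_trans hpg (dvd_trans (dvd_mul_right g g) ⟨k, hk⟩))
  obtain ⟨u, hu⟩ := hXF
  rw [hu, eval_mul, eval_X] at hF1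
  have h0 : (Pi.single (I1 m) 1 : Fin (m+3+1) → ℂ) (I0 m) = 0 :=
    Pi.single_eq_of_ne (Fin.ne_of_val_ne (show (0:ℕ) ≠ 1 by omega)) 1
  rw [h0, zero_mul] at hF1
  exact zero_ne_one hF1

end

end Hom8


/-- For every `n ≥ 3` and every `d ≥ 2` there exists a reduced
homaloidal hypersurface in `ℙⁿ` of degree `d`, i.e. a reduced hypersurface whose polar
map is birational (has topological degree 1). -/
theorem exists_reduced_homaloidal_hypersurface :
    ∀ n : ℕ, 3 ≤ n → ∀ d : ℕ, 2 ≤ d →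
      ∃ f : MvPolynomial (Fin (n+1)) ℂ,
        f.IsHomogeneous d ∧ Squarefree f ∧ HasPolarDegree f 1 := by
  intro n hn d hd
  obtain ⟨m, rfl⟩ : ∃ m, n = m + 3 := ⟨n - 3, by omega⟩
  obtain ⟨e, rfl⟩ : ∃ e, d = e + 2 := ⟨d - 2, by omega⟩
  refine ⟨Hom8.F m e, Hom8.F_homog, Hom8.F_squarefree, ?_⟩
  refine ⟨{y | y (Hom8.IN m) ≠ 0}, Hom8.dense_U, ?_⟩
  intro y hy _
  have hyN : y (Hom8.IN m) ≠ 0 := hy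
  have hset : {x : ℙ ℂ (Fin (m+3+1) → ℂ) | ∃ v : Fin (m+3+1) → ℂ, ∃ hv : v ≠ 0,
        Projectivization.mk ℂ v hv = x ∧ ∃ c : ℂ, c ≠ 0 ∧ polarMapVec (Hom8.F m e) v = c • y}
      = {Projectivization.mk ℂ (Hom8.sol m e y) (Hom8.sol_ne_zero y)} := by
    ext x
    simp only [Set.mem_setOf_eq, Set.mem_singleton_iff]
    constructor
    · rintro ⟨v, hv, rfl, c, hc, hgrad⟩
      obtain ⟨ht, hveq⟩ := Hom8.sol_unique y v hyN c hc hgrad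
      rw [Projectivization.mk_eq_mk_iff']
      exact ⟨v (Hom8.I0 m), hveq.symm⟩
    · rintro rfl
      exact ⟨Hom8.sol m e y, Hom8.sol_ne_zero y, rfl, Hom8.cc0 m y,
        inv_ne_zero hyN, Hom8.grad_sol y hyN⟩
  rw [hset]
  exact Nat.card_unique
end

section
/- Let f ∈ C[x_0,...,x_n] be homogeneous of degree k and let F be the foliation of P^{n+1} defined by the 1-form ω = x_{n+1} df − k f dx_{n+1}, with Gauss map G_F : P^{n+1} ⇢ P^{n+1}, x ↦ (x_{n+1} f_{x_0} : ... : x_{n+1} f_{x_n} : −k f). Then the projection ρ(x_0:...:x_{n+1}) = (x_0:...:x_n) from the point (0:...:0:1) satisfies ρ ∘ G_F = (∇f) ∘ ρ as rational maps, and the topological degrees of G_F and the polar map ∇f coincide. -/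
open MvPolynomial Cardinal
open scoped LinearAlgebra.Projectivization

/-- A self-map of `ℂ^(m+1)` given in homogeneous coordinates has topological degree
`d`: the generic fiber of the induced rational self-map of `ℙᵐ` has `d` points. -/
def HasTopDegree {m : ℕ} (g : (Fin (m+1) → ℂ) → (Fin (m+1) → ℂ)) (d : ℕ) : Prop :=
  ∃ U : Set (Fin (m+1) → ℂ), Dense U ∧ ∀ y ∈ U, y ≠ 0 →
    Nat.card {x : ℙ ℂ (Fin (m+1) → ℂ) | ∃ v : Fin (m+1) → ℂ, ∃ hv : v ≠ 0,
      Projectivization.mk ℂ v hv = x ∧ ∃ c : ℂ, c ≠ 0 ∧ g v = c • y} = d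

/-- The Gauss map of the foliation of `ℙ^(n+1)` defined by
`ω = x_{n+1} df − k f dx_{n+1}`, in homogeneous coordinates:
`x ↦ (x_{n+1} f_{x₀} : ⋯ : x_{n+1} f_{xₙ} : −k f)`. -/
noncomputable def gaussVec {n : ℕ} (k : ℕ) (f : MvPolynomial (Fin (n+1)) ℂ)
    (v : Fin (n+1+1) → ℂ) : Fin (n+1+1) → ℂ :=
  Fin.snoc (fun i => v (Fin.last (n+1)) * polarMapVec f (v ∘ Fin.castSucc) i)
    (-(k : ℂ) * eval (v ∘ Fin.castSucc) f)

section Helpers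

lemma eval_smul_isHomogeneous {m k : ℕ} {g : MvPolynomial (Fin m) ℂ}
    (hg : g.IsHomogeneous k) (c : ℂ) (v : Fin m → ℂ) :
    eval (c • v) g = c ^ k * eval v g := by
  rw [eval_eq, eval_eq, Finset.mul_sum]
  refine Finset.sum_congr rfl fun d hd => ?_
  have hdeg : d.degree = k := by
    by_contra h
    exact (mem_support_iff.mp hd) (hg.coeff_eq_zero h)
  have h1 : ∀ i ∈ d.support, ((c • v) i) ^ d i = c ^ d i * (v i) ^ d i := by
    intro i _
    simp [mul_pow]
  rw [Finset.prod_congr rfl h1, Finset.prod_mul_distrib, Finset.prod_pow_eq_pow_sum]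
  have h2 : ∑ i ∈ d.support, d i = k := hdeg
  rw [h2]
  ring

lemma isHomogeneous_pderiv {m k : ℕ} {g : MvPolynomial (Fin m) ℂ}
    (hg : g.IsHomogeneous k) (i : Fin m) :
    (pderiv i g).IsHomogeneous (k - 1) := by
  conv_lhs => rw [g.as_sum]
  rw [map_sum]
  apply IsHomogeneous.sum
  intro d hd
  rw [pderiv_monomial]
  rcases eq_or_ne ((d i : ℂ)) 0 with h | h
  · rw [h, mul_zero, monomial_zero]
    exact isHomogeneous_zero _ _ _
  · apply isHomogeneous_monomial
    have hdi : 1 ≤ d i := by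
      rcases Nat.eq_zero_or_pos (d i) with h0 | h0
      · exact absurd (by rw [h0, Nat.cast_zero]) h
      · exact h0
    have hle : Finsupp.single i 1 ≤ d := Finsupp.single_le_iff.mpr hdi
    have hsum : (d - Finsupp.single i 1) + Finsupp.single i 1 = d := tsub_add_cancel_of_le hle
    have hdeg : d.degree = k := by
      by_contra hc
      exact (mem_support_iff.mp hd) (hg.coeff_eq_zero hc)
    have hdegs : (Finsupp.single i 1).degree = 1 := by
      rw [Finsupp.degree_eq_weight_one]
      simp [Finsupp.weight_apply, Finsupp.sum_single_index]
    have := congrArg Finsupp.degree hsum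
    rw [Finsupp.degree_eq_weight_one] at this hdeg hdegs ⊢
    rw [map_add] at this
    omega

lemma polarMapVec_smul {n k : ℕ} {f : MvPolynomial (Fin (n+1)) ℂ}
    (hhom : f.IsHomogeneous k) (c : ℂ) (v : Fin (n+1) → ℂ) :
    polarMapVec f (c • v) = c ^ (k-1) • polarMapVec f v := by
  funext i
  simp only [polarMapVec, Pi.smul_apply, smul_eq_mul]
  exact eval_smul_isHomogeneous (isHomogeneous_pderiv hhom i) c v

lemma polarMapVec_const {n : ℕ} {f : MvPolynomial (Fin (n+1)) ℂ}
    (hhom : f.IsHomogeneous 1) (v : Fin (n+1) → ℂ) :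
    polarMapVec f v = polarMapVec f 0 := by
  have := polarMapVec_smul hhom 0 v
  rw [zero_smul] at this
  rw [this]
  norm_num

lemma eval_zero_of_pos {n k : ℕ} {f : MvPolynomial (Fin (n+1)) ℂ}
    (hhom : f.IsHomogeneous k) (hk : 1 ≤ k) :
    eval (0 : Fin (n+1) → ℂ) f = 0 := by
  have := eval_smul_isHomogeneous hhom 0 0
  rw [zero_smul] at this
  rw [this, zero_pow (by omega), zero_mul]

lemma gaussVec_smul {n k : ℕ} {f : MvPolynomial (Fin (n+1)) ℂ}
    (hhom : f.IsHomogeneous k) (hk : 1 ≤ k) (c : ℂ) (v : Fin (n+1+1) → ℂ) :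
    gaussVec k f (c • v) = c ^ k • gaussVec k f v := by
  have hcast : (c • v) ∘ Fin.castSucc = c • (v ∘ Fin.castSucc) := rfl
  have hkk : c ^ (k - 1) * c = c ^ k := by
    conv_rhs => rw [show k = (k-1) + 1 by omega]
    rw [pow_succ]
  funext w
  refine Fin.lastCases ?_ ?_ w
  · simp only [gaussVec, Fin.snoc_last, Pi.smul_apply, smul_eq_mul, hcast]
    rw [eval_smul_isHomogeneous hhom]
    ring
  · intro i
    simp only [gaussVec, Fin.snoc_castSucc, Pi.smul_apply, smul_eq_mul, hcast]
    rw [polarMapVec_smul hhom]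
    simp only [Pi.smul_apply, smul_eq_mul]
    rw [← hkk]; ring

end Helpers

lemma dense_eval_ne_zero {m : ℕ} {P : MvPolynomial (Fin m) ℂ} (hP : P ≠ 0) :
    Dense {y : Fin m → ℂ | eval y P ≠ 0} := by
  rw [Metric.dense_iff]
  intro a r hr
  obtain ⟨b, hb⟩ : ∃ b, eval b P ≠ 0 := by
    by_contra h
    push_neg at h
    exact hP (MvPolynomial.funext (fun x => by rw [h x, map_zero]))
  set line : Fin m → Polynomial ℂ := fun i => Polynomial.C (a i) + Polynomial.C (b i - a i) * Polynomial.X with hline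
  set q : Polynomial ℂ := aeval line P with hq
  have key : ∀ t : ℂ, q.eval t = eval (a + t • (b - a)) P := by
    intro t
    have h1 : q.eval t = Polynomial.evalRingHom t (aeval line P) := rfl
    rw [h1, aeval_def, eval₂_comp_left]
    have h2 : (Polynomial.evalRingHom t).comp (algebraMap ℂ (Polynomial ℂ)) = RingHom.id ℂ := by
      ext x
      simp
    have h3 : ((Polynomial.evalRingHom t) ∘ line) = fun i => a i + t * (b i - a i) := by
      funext i
      simp [hline]
      ring
    rw [h2, h3]
    have h4 : (a + t • (b - a)) = fun i => a i + t * (b i - a i) := by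
      funext i
      simp
    rw [h4]
    rfl
  have hq0 : q ≠ 0 := by
    intro h0
    have := key 1
    rw [h0] at this
    simp at this
    exact hb this.symm
  set δ : ℝ := r / (‖b - a‖ + 1) with hδ
  have hδpos : 0 < δ := by
    apply div_pos hr
    positivity
  have hTinf : Set.Infinite {t : ℂ | ‖t‖ < δ} := by
    apply Set.infinite_of_injective_forall_mem (f := fun j : ℕ => ((δ / ((j:ℝ) + 2) : ℝ) : ℂ))
    case hi =>
      intro j j' hjj
      simp only at hjj
      have h1 := Complex.ofReal_inj.mp hjj
      push_cast at h1
      have hδ0 : δ ≠ 0 := ne_of_gt hδpos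
      have hj2 : ((j:ℝ)+2) ≠ 0 := by positivity
      have hj2' : ((j':ℝ)+2) ≠ 0 := by positivity
      rw [div_eq_div_iff hj2 hj2'] at h1
      have h3 : ((j':ℝ)+2) * δ = ((j:ℝ)+2) * δ := by linarith
      have h4 : ((j':ℝ)+2) = ((j:ℝ)+2) := mul_right_cancel₀ hδ0 h3
      have : (j:ℝ) = (j':ℝ) := by linarith
      exact_mod_cast this
    case hf =>
      intro j
      simp only [Set.mem_setOf_eq, Complex.norm_real, Real.norm_eq_abs]
      rw [abs_of_pos (by positivity)]
      rw [div_lt_iff₀ (by positivity)]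
      nlinarith [hδpos]
  obtain ⟨t, ht, htr⟩ : ∃ t : ℂ, ‖t‖ < δ ∧ ¬ q.IsRoot t := by
    by_contra h
    push_neg at h
    exact hTinf (Set.Finite.subset (Polynomial.finite_setOf_isRoot hq0) (fun t ht => h t ht))
  refine ⟨a + t • (b - a), ?_, ?_⟩
  · rw [Metric.mem_ball, dist_eq_norm]
    rw [show a + t • (b - a) - a = t • (b - a) by module]
    rw [norm_smul]
    calc ‖t‖ * ‖b - a‖ ≤ ‖t‖ * (‖b - a‖ + 1) := by
          apply mul_le_mul_of_nonneg_left (by linarith) (norm_nonneg t)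
      _ < δ * (‖b - a‖ + 1) := by
          apply mul_lt_mul_of_pos_right ht (by positivity)
      _ = r := by
          rw [hδ]
          field_simp
  · simp only [Set.mem_setOf_eq]
    rw [← key t]
    exact htr

open Classical in
lemma rank_restrictDegree (N : ℕ) (m : ℕ) :
    Module.rank ℂ (restrictDegree (Fin N) ℂ m) = (((m+1) ^ N : ℕ) : Cardinal) := by
  have e1 : {x : ℕ // x ≤ m} ≃ Fin (m+1) :=
    ((Fin.equivSubtype).trans (Equiv.subtypeEquivRight (fun x => Nat.lt_succ_iff))).symm
  calc Module.rank ℂ (restrictDegree (Fin N) ℂ m)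
      = Module.rank ℂ (↥{ s : Fin N →₀ ℕ | ∀ n : Fin N, s n ≤ m } →₀ ℂ) :=
        LinearEquiv.rank_eq (AddMonoidAlgebra.supportedEquivFinsupp _)
    _ = #{ s : Fin N →₀ ℕ | ∀ n : Fin N, s n ≤ m } := by rw [rank_finsupp_self']
    _ = #{ s : Fin N → ℕ | ∀ n : Fin N, s n ≤ m } :=
        Quotient.sound ⟨Equiv.subtypeEquiv Finsupp.equivFunOnFinite fun f => Iff.rfl⟩
    _ = #(Fin N → { x : ℕ // x ≤ m }) :=
        (Equiv.subtypePiEquivPi (β := fun _ : Fin N => ℕ) (p := fun _ x => x ≤ m)).cardinal_eq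
    _ = #(Fin N → Fin (m+1)) := (Equiv.arrowCongr (Equiv.refl (Fin N)) e1).cardinal_eq
    _ = (((m+1) ^ N : ℕ) : Cardinal) := by
        rw [Cardinal.mk_fintype]
        norm_cast
        rw [Fintype.card_fun]
        simp

lemma finiteDimensional_restrictDegree (N : ℕ) (m : ℕ) :
    FiniteDimensional ℂ (restrictDegree (Fin N) ℂ m) := by
  apply IsNoetherian.iff_fg.1
  apply IsNoetherian.iff_rank_lt_aleph0.mpr
  rw [rank_restrictDegree]
  exact Cardinal.nat_lt_aleph0 _

lemma finrank_restrictDegree (N : ℕ) (m : ℕ) :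
    Module.finrank ℂ (restrictDegree (Fin N) ℂ m) = (m+1) ^ N :=
  Module.finrank_eq_of_rank_eq (rank_restrictDegree N m)

lemma exists_annihilating_poly {p : ℕ} (g : Fin (p+1) → MvPolynomial (Fin p) ℂ) :
    ∃ Q : MvPolynomial (Fin (p+1)) ℂ, Q ≠ 0 ∧ aeval g Q = 0 := by
  classical
  by_contra hcon
  push_neg at hcon
  set M := (Finset.univ.sup fun i => (g i).totalDegree) + 1 with hM
  have hMg : ∀ i, (g i).totalDegree ≤ M := fun i => by
    rw [hM]; exact Nat.le_succ_of_le (Finset.le_sup (f := fun i => (g i).totalDegree) (Finset.mem_univ i))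
  set c := (p+1) * M with hc
  have hc1 : 1 ≤ c := Nat.one_le_iff_ne_zero.mpr (by positivity)
  set D := c ^ p with hD
  set E := c * D with hE
  have hdeg : ∀ Q ∈ restrictDegree (Fin (p+1)) ℂ D, (aeval g Q).totalDegree ≤ E := by
    intro Q hQ
    rw [mem_restrictDegree] at hQ
    rw [aeval_def, eval₂_eq]
    refine le_trans (totalDegree_finset_sum _ _) (Finset.sup_le ?_)
    intro d hd
    refine le_trans (totalDegree_mul _ _) ?_
    rw [MvPolynomial.algebraMap_eq, totalDegree_C, zero_add]
    refine le_trans (totalDegree_finset_prod _ _) ?_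
    have hterm : ∀ i ∈ d.support, (g i ^ d i).totalDegree ≤ D * M := by
      intro i _
      refine le_trans (totalDegree_pow _ _) ?_
      exact Nat.mul_le_mul (hQ d hd i) (hMg i)
    refine le_trans (Finset.sum_le_sum hterm) ?_
    refine le_trans (Finset.sum_le_sum_of_subset (Finset.subset_univ _)) ?_
    rw [Finset.sum_const, Finset.card_univ, Fintype.card_fin, smul_eq_mul, hE, hc]
    ring_nf
    exact le_refl _
  have hmaps : ∀ Q ∈ restrictDegree (Fin (p+1)) ℂ D, aeval g Q ∈ restrictDegree (Fin p) ℂ E := by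
    intro Q hQ
    have h' : aeval g Q ∈ restrictTotalDegree (Fin p) ℂ E := by
      rw [mem_restrictTotalDegree]
      exact hdeg Q hQ
    exact restrictTotalDegree_le_restrictDegree _ _ _ h'
  set L := (aeval g).toLinearMap.restrict hmaps with hL
  have hinj : Function.Injective L := by
    intro a b hab
    have h1 : aeval g a.1 = aeval g b.1 := by
      have := congrArg Subtype.val hab
      simpa [hL, LinearMap.restrict_apply] using this
    have h2 : aeval g (a.1 - b.1) = 0 := by rw [map_sub, h1, sub_self]
    have h3 : (a.1 - b.1 : MvPolynomial (Fin (p+1)) ℂ) = 0 := by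
      by_contra hne
      exact hcon _ hne h2
    exact Subtype.ext (by linear_combination (norm := module) h3)
  have hFD1 := finiteDimensional_restrictDegree (p+1) D
  have hFD2 := finiteDimensional_restrictDegree p E
  have hle := LinearMap.finrank_le_finrank_of_injective hinj
  rw [finrank_restrictDegree, finrank_restrictDegree] at hle
  -- hle : (D+1)^(p+1) ≤ (E+1)^p
  have h5 : E + 1 ≤ c * (D+1) := by
    rw [hE]
    calc c * D + 1 ≤ c * D + c := by omega
      _ = c * (D + 1) := by ring
  have h6 : (E+1)^p ≤ (c*(D+1))^p := Nat.pow_le_pow_left h5 p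
  have h7 : (c*(D+1))^p = D * (D+1)^p := by rw [mul_pow, hD]
  have h8 : (D+1)^(p+1) = (D+1) * (D+1)^p := by ring
  have hpos : 0 < (D+1)^p := pow_pos (by omega) p
  have h9 : (D+1) * (D+1)^p ≤ D * (D+1)^p := by rw [← h8, ← h7]; exact le_trans hle h6
  have h10 : D + 1 ≤ D := Nat.le_of_mul_le_mul_right h9 hpos
  omega

lemma exists_vanishing_on_polar_image {n : ℕ} {f : MvPolynomial (Fin (n+1)) ℂ} (hf : f ≠ 0) :
    ∃ P : MvPolynomial (Fin (n+1)) ℂ, P ≠ 0 ∧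
      ∀ v : Fin (n+1) → ℂ, eval v f = 0 → eval (polarMapVec f v) P = 0 := by
  set pd : Fin (n+1) → MvPolynomial (Fin (n+1)) ℂ := fun i => pderiv i f with hpd
  obtain ⟨Q, hQ0, hQa⟩ := exists_annihilating_poly (p := n+1) (Fin.cases f pd)
  set q : Polynomial (MvPolynomial (Fin (n+1)) ℂ) := finSuccEquiv ℂ (n+1) Q with hqdef
  have hq0 : q ≠ 0 := by
    intro h
    exact hQ0 ((finSuccEquiv ℂ (n+1)).injective (by rw [map_zero, ← hqdef]; exact h))
  set j0 := q.natTrailingDegree with hj0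
  have hdvd : (Polynomial.X : Polynomial (MvPolynomial (Fin (n+1)) ℂ)) ^ j0 ∣ q :=
    Polynomial.X_pow_dvd_iff.mpr (fun d hd => Polynomial.coeff_eq_zero_of_lt_natTrailingDegree hd)
  obtain ⟨q1, hq1⟩ := hdvd
  have hcoeff : q1.coeff 0 = q.coeff j0 := by
    rw [hq1]
    simpa using (Polynomial.coeff_X_pow_mul q1 j0 0).symm
  set hh : MvPolynomial (Fin (n+1)) ℂ →+* MvPolynomial (Fin (n+1)) ℂ :=
    (eval₂Hom (C : ℂ →+* MvPolynomial (Fin (n+1)) ℂ) pd : _ →+* _) with hhh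
  -- main substitution identity
  have I1 : aeval (Fin.cases f pd : Fin (n+1+1) → MvPolynomial (Fin (n+1)) ℂ) Q
      = Polynomial.eval f (Polynomial.map hh q) := by
    have hcomp : (eval₂Hom (C : ℂ →+* MvPolynomial (Fin (n+1)) ℂ) (Fin.cases f pd))
        = ((Polynomial.evalRingHom f).comp ((Polynomial.mapRingHom hh).comp
            ((finSuccEquiv ℂ (n+1) : MvPolynomial (Fin (n+1+1)) ℂ ≃ₐ[ℂ] _) :
              MvPolynomial (Fin (n+1+1)) ℂ →+* Polynomial (MvPolynomial (Fin (n+1)) ℂ)))) := by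
      apply MvPolynomial.ringHom_ext
      · intro r
        simp [hhh, finSuccEquiv_apply, eval₂Hom_C]
      · intro i
        refine Fin.cases ?_ ?_ i
        · simp [finSuccEquiv_X_zero]
        · intro j
          simp [finSuccEquiv_X_succ, hhh]
    have := congrFun (congrArg DFunLike.coe hcomp) Q
    simpa [aeval_def, hqdef] using this
  rw [hQa] at I1
  have I2 : Polynomial.eval f (Polynomial.map hh q1) = 0 := by
    have h1 : (0 : MvPolynomial (Fin (n+1)) ℂ)
        = f ^ j0 * Polynomial.eval f (Polynomial.map hh q1) := by
      rw [I1, hq1, Polynomial.map_mul, Polynomial.map_pow, Polynomial.map_X,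
        Polynomial.eval_mul, Polynomial.eval_pow, Polynomial.eval_X]
    have h2 : f ^ j0 ≠ 0 := pow_ne_zero _ hf
    rcases mul_eq_zero.mp h1.symm with h | h
    · exact absurd h h2
    · exact h
  refine ⟨q1.coeff 0, ?_, ?_⟩
  · rw [hcoeff]
    exact Polynomial.coeff_natTrailingDegree_ne_zero.mpr hq0
  · intro v hv
    have h3 := congrArg (eval v) I2
    rw [map_zero] at h3
    -- eval v (Polynomial.eval f (map hh q1)) = 0
    have h4 : (eval v) (Polynomial.eval f (Polynomial.map hh q1))
        = Polynomial.eval₂ (eval v : MvPolynomial (Fin (n+1)) ℂ →+* ℂ) (eval v f)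
            (Polynomial.map hh q1) := by
      rw [Polynomial.eval, Polynomial.hom_eval₂]
      rfl
    rw [h4, hv, Polynomial.eval₂_at_zero, Polynomial.coeff_map] at h3
    -- h3 : eval v (hh (q1.coeff 0)) = 0
    have h5 : (eval v) (hh (q1.coeff 0)) = eval (polarMapVec f v) (q1.coeff 0) := by
      rw [hhh]
      simp only [coe_eval₂Hom]
      rw [eval₂_comp_left (eval v : MvPolynomial (Fin (n+1)) ℂ →+* ℂ) C pd (q1.coeff 0)]
      have hC : (eval v : MvPolynomial (Fin (n+1)) ℂ →+* ℂ).comp (C : ℂ →+* _) = RingHom.id ℂ := by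
        ext r
        simp
      rw [hC]
      rfl
    rw [h5] at h3
    exact h3

lemma card_fiber_eq {n k : ℕ} (hk : 1 ≤ k) {f : MvPolynomial (Fin (n+1)) ℂ}
    (hhom : f.IsHomogeneous k) {y' : Fin (n+1) → ℂ} (hy' : y' ≠ 0) {s : ℂ} (hs : s ≠ 0)
    (hbad : ∀ v : Fin (n+1) → ℂ, v ≠ 0 → ∀ c : ℂ, c ≠ 0 → polarMapVec f v = c • y' →
      eval v f ≠ 0) :
    Nat.card {x : ℙ ℂ (Fin (n+1+1) → ℂ) | ∃ v : Fin (n+1+1) → ℂ, ∃ hv : v ≠ 0,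
      Projectivization.mk ℂ v hv = x ∧ ∃ c : ℂ, c ≠ 0 ∧ gaussVec k f v = c • (Fin.snoc y' s : Fin (n+1+1) → ℂ)} =
    Nat.card {x : ℙ ℂ (Fin (n+1) → ℂ) | ∃ v : Fin (n+1) → ℂ, ∃ hv : v ≠ 0,
      Projectivization.mk ℂ v hv = x ∧ ∃ c : ℂ, c ≠ 0 ∧ polarMapVec f v = c • y'} := by
  obtain ⟨j, hj⟩ : ∃ j, y' j ≠ 0 := by
    by_contra h
    push_neg at h
    exact hy' (funext fun i => h i)
  have hkC : (k:ℂ) ≠ 0 := Nat.cast_ne_zero.mpr (by omega)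
  -- transfer the fiber property to the canonical representative
  have repG : ∀ x : ℙ ℂ (Fin (n+1+1) → ℂ),
      (∃ v : Fin (n+1+1) → ℂ, ∃ hv : v ≠ 0, Projectivization.mk ℂ v hv = x ∧
        ∃ c : ℂ, c ≠ 0 ∧ gaussVec k f v = c • (Fin.snoc y' s : Fin (n+1+1) → ℂ)) →
      ∃ c : ℂ, c ≠ 0 ∧ gaussVec k f x.rep = c • (Fin.snoc y' s : Fin (n+1+1) → ℂ) := by
    rintro x ⟨v, hv, hmk, c, hc, hgv⟩
    subst hmk
    obtain ⟨a, ha⟩ := Projectivization.exists_smul_eq_mk_rep ℂ v hv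
    refine ⟨(a:ℂ)^k * c, mul_ne_zero (pow_ne_zero _ (Units.ne_zero a)) hc, ?_⟩
    rw [← ha, Units.smul_def, gaussVec_smul hhom hk, hgv, smul_smul]
  have repP : ∀ x : ℙ ℂ (Fin (n+1) → ℂ),
      (∃ v : Fin (n+1) → ℂ, ∃ hv : v ≠ 0, Projectivization.mk ℂ v hv = x ∧
        ∃ c : ℂ, c ≠ 0 ∧ polarMapVec f v = c • y') →
      ∃ c : ℂ, c ≠ 0 ∧ polarMapVec f x.rep = c • y' := by
    rintro x ⟨v, hv, hmk, c, hc, hgv⟩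
    subst hmk
    obtain ⟨a, ha⟩ := Projectivization.exists_smul_eq_mk_rep ℂ v hv
    refine ⟨(a:ℂ)^(k-1) * c, mul_ne_zero (pow_ne_zero _ (Units.ne_zero a)) hc, ?_⟩
    rw [← ha, Units.smul_def, polarMapVec_smul hhom, hgv, smul_smul]
  -- component extraction for gauss fibers
  have comp : ∀ (r : Fin (n+1+1) → ℂ) (c : ℂ), gaussVec k f r = c • (Fin.snoc y' s : Fin (n+1+1) → ℂ) →
      (-(k:ℂ) * eval (r ∘ Fin.castSucc) f = c * s ∧
        ∀ i, r (Fin.last (n+1)) * polarMapVec f (r ∘ Fin.castSucc) i = c * y' i) := by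
    intro r c hg
    constructor
    · have := congrFun hg (Fin.last (n+1))
      simpa [gaussVec, Fin.snoc_last] using this
    · intro i
      have := congrFun hg (Fin.castSucc i)
      simpa [gaussVec, Fin.snoc_castSucc] using this
  have keyG : ∀ (x : ℙ ℂ (Fin (n+1+1) → ℂ)) (c : ℂ), c ≠ 0 →
      gaussVec k f x.rep = c • (Fin.snoc y' s : Fin (n+1+1) → ℂ) →
      (x.rep ∘ Fin.castSucc ≠ 0 ∧ x.rep (Fin.last (n+1)) ≠ 0 ∧
        polarMapVec f (x.rep ∘ Fin.castSucc) = (c / x.rep (Fin.last (n+1))) • y' ∧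
        c / x.rep (Fin.last (n+1)) ≠ 0) := by
    intro x c hc hg
    obtain ⟨hlast, hcastc⟩ := comp x.rep c hg
    have hev : eval (x.rep ∘ Fin.castSucc) f ≠ 0 := by
      intro h0
      rw [h0, mul_zero] at hlast
      exact (mul_ne_zero hc hs) hlast.symm
    have hne : x.rep ∘ Fin.castSucc ≠ 0 := by
      intro h0
      rw [h0] at hev
      exact hev (eval_zero_of_pos hhom hk)
    have hrl : x.rep (Fin.last (n+1)) ≠ 0 := by
      intro h0
      have := hcastc j
      rw [h0, zero_mul] at this
      exact (mul_ne_zero hc hj) this.symm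
    refine ⟨hne, hrl, ?_, div_ne_zero hc hrl⟩
    funext i
    have := hcastc i
    rw [Pi.smul_apply, smul_eq_mul]
    field_simp [Pi.smul_apply, smul_eq_mul]
    linear_combination this
  apply Nat.card_congr
  refine Equiv.ofBijective (fun z =>
    ⟨Projectivization.mk ℂ (z.1.rep ∘ Fin.castSucc)
      (keyG z.1 (repG z.1 z.2).choose (repG z.1 z.2).choose_spec.1
        (repG z.1 z.2).choose_spec.2).1, ?_⟩) ⟨?_, ?_⟩
  · -- membership in polar fiber set
    have hK := keyG z.1 (repG z.1 z.2).choose (repG z.1 z.2).choose_spec.1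
        (repG z.1 z.2).choose_spec.2
    exact ⟨z.1.rep ∘ Fin.castSucc, hK.1, rfl, _, hK.2.2.2, hK.2.2.1⟩
  · -- injectivity
    intro z₁ z₂ hzz
    have hc₁ := (repG z₁.1 z₁.2).choose_spec
    have hc₂ := (repG z₂.1 z₂.2).choose_spec
    set c₁ := (repG z₁.1 z₁.2).choose with hc₁d
    set c₂ := (repG z₂.1 z₂.2).choose with hc₂d
    set r₁ := z₁.1.rep with hr₁
    set r₂ := z₂.1.rep with hr₂
    have hK₁ := keyG z₁.1 c₁ hc₁.1 hc₁.2
    have hK₂ := keyG z₂.1 c₂ hc₂.1 hc₂.2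
    have hmk : Projectivization.mk ℂ (r₁ ∘ Fin.castSucc) hK₁.1
        = Projectivization.mk ℂ (r₂ ∘ Fin.castSucc) hK₂.1 := by
      simpa using congrArg Subtype.val hzz
    obtain ⟨a, ha⟩ := (Projectivization.mk_eq_mk_iff ℂ _ _ _ _).mp hmk
    have ha' : ((a:ℂ) • (r₂ ∘ Fin.castSucc)) = r₁ ∘ Fin.castSucc := by
      rw [← Units.smul_def]; exact ha
    have ha0 : (a:ℂ) ≠ 0 := Units.ne_zero a
    have hak1 : (a:ℂ)^(k-1) ≠ 0 := pow_ne_zero _ ha0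
    obtain ⟨hl₁, hcs₁⟩ := comp r₁ c₁ hc₁.2
    obtain ⟨hl₂, hcs₂⟩ := comp r₂ c₂ hc₂.2
    have he : eval (r₁ ∘ Fin.castSucc) f = (a:ℂ)^k * eval (r₂ ∘ Fin.castSucc) f := by
      rw [← ha', eval_smul_isHomogeneous hhom]
    have hc12 : c₁ = (a:ℂ)^k * c₂ := by
      have h1 : c₁ * s = ((a:ℂ)^k * c₂) * s := by
        rw [← hl₁, he]
        linear_combination (a:ℂ)^k * hl₂
      exact mul_right_cancel₀ hs h1
    have hpol : polarMapVec f (r₁ ∘ Fin.castSucc)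
        = (a:ℂ)^(k-1) • polarMapVec f (r₂ ∘ Fin.castSucc) := by
      rw [← ha', polarMapVec_smul hhom]
    have hp2j : polarMapVec f (r₂ ∘ Fin.castSucc) j ≠ 0 := by
      intro h0
      have h1 := hcs₂ j
      rw [h0, mul_zero] at h1
      exact (mul_ne_zero hc₂.1 hj) h1.symm
    have hak : (a:ℂ)^k = (a:ℂ)^(k-1) * a := by
      conv_lhs => rw [show k = (k-1)+1 by omega]
      rw [pow_succ]
    have htt : r₁ (Fin.last (n+1)) = (a:ℂ) * r₂ (Fin.last (n+1)) := by
      have e₁ := hcs₁ j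
      have e₂ := hcs₂ j
      rw [hpol] at e₁
      simp only [Pi.smul_apply, smul_eq_mul] at e₁
      have hmul : r₁ (Fin.last (n+1)) * ((a:ℂ)^(k-1) * polarMapVec f (r₂ ∘ Fin.castSucc) j)
          = ((a:ℂ) * r₂ (Fin.last (n+1))) * ((a:ℂ)^(k-1) * polarMapVec f (r₂ ∘ Fin.castSucc) j) := by
        calc r₁ (Fin.last (n+1)) * ((a:ℂ)^(k-1) * polarMapVec f (r₂ ∘ Fin.castSucc) j)
            = c₁ * y' j := by linear_combination e₁
          _ = (a:ℂ)^k * (c₂ * y' j) := by rw [hc12]; ring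
          _ = (a:ℂ)^k * (r₂ (Fin.last (n+1)) * polarMapVec f (r₂ ∘ Fin.castSucc) j) := by
              rw [e₂]
          _ = ((a:ℂ) * r₂ (Fin.last (n+1))) * ((a:ℂ)^(k-1) * polarMapVec f (r₂ ∘ Fin.castSucc) j) := by
              rw [hak]; ring
      exact mul_right_cancel₀ (mul_ne_zero hak1 hp2j) hmul
    have hvec : ((a:ℂ) • r₂) = r₁ := by
      funext w
      refine Fin.lastCases ?_ ?_ w
      · simp only [Pi.smul_apply, smul_eq_mul]
        exact htt.symm
      · intro i
        exact congrFun ha' i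
    have hz : z₁.1 = z₂.1 := by
      rw [← Projectivization.mk_rep z₁.1, ← Projectivization.mk_rep z₂.1]
      exact (Projectivization.mk_eq_mk_iff ℂ _ _ _ _).mpr ⟨a, by rw [Units.smul_def]; exact hvec⟩
    exact Subtype.ext hz
  · -- surjectivity
    rintro ⟨xp, hxp⟩
    obtain ⟨cp, hcp, hpol⟩ := repP xp hxp
    have hfv : eval xp.rep f ≠ 0 := hbad xp.rep xp.rep_nonzero cp hcp hpol
    set c : ℂ := (-(k:ℂ) * eval xp.rep f) / s with hcdef
    have hc : c ≠ 0 := div_ne_zero (mul_ne_zero (neg_ne_zero.mpr hkC) hfv) hs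
    set t : ℂ := c / cp with htdef
    set w : Fin (n+1+1) → ℂ := Fin.snoc xp.rep t with hwdef
    have hwc : w ∘ Fin.castSucc = xp.rep := by
      funext i
      simp [hwdef]
    have hwl : w (Fin.last (n+1)) = t := by simp [hwdef]
    have hw : w ≠ 0 := by
      intro h0
      apply xp.rep_nonzero
      rw [← hwc, h0]
      rfl
    have hgw : gaussVec k f w = c • (Fin.snoc y' s : Fin (n+1+1) → ℂ) := by
      funext u
      refine Fin.lastCases ?_ ?_ u
      · simp only [gaussVec, Fin.snoc_last, Pi.smul_apply, smul_eq_mul, hwc]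
        rw [hcdef]
        field_simp
      · intro i
        simp only [gaussVec, Fin.snoc_castSucc, Pi.smul_apply, smul_eq_mul, hwc, hwl]
        rw [hpol]
        simp only [Pi.smul_apply, smul_eq_mul]
        rw [htdef]
        field_simp
    refine ⟨⟨Projectivization.mk ℂ w hw, ⟨w, hw, rfl, c, hc, hgw⟩⟩, ?_⟩
    apply Subtype.ext
    obtain ⟨b, hb⟩ := Projectivization.exists_smul_eq_mk_rep ℂ w hw
    have hbc : ((b:ℂ) • xp.rep) = ((Projectivization.mk ℂ w hw).rep ∘ Fin.castSucc) := by
      funext i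
      rw [← hb]
      simp only [Units.smul_def, Pi.smul_apply, smul_eq_mul, Function.comp_apply]
      rw [← congrFun hwc i]
      rfl
    show Projectivization.mk ℂ ((Projectivization.mk ℂ w hw).rep ∘ Fin.castSucc) _ = xp
    calc Projectivization.mk ℂ ((Projectivization.mk ℂ w hw).rep ∘ Fin.castSucc) _
        = Projectivization.mk ℂ xp.rep xp.rep_nonzero :=
          (Projectivization.mk_eq_mk_iff ℂ _ _ _ _).mpr ⟨b, by rw [Units.smul_def]; exact hbc⟩
      _ = xp := Projectivization.mk_rep xp


lemma hasTopDegree_zero_map {m : ℕ} {g : (Fin (m+1) → ℂ) → (Fin (m+1) → ℂ)}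
    (hg : ∀ v, g v = 0) (d : ℕ) : HasTopDegree g d ↔ d = 0 := by
  have hempty : ∀ y : Fin (m+1) → ℂ, y ≠ 0 →
      {x : ℙ ℂ (Fin (m+1) → ℂ) | ∃ v : Fin (m+1) → ℂ, ∃ hv : v ≠ 0,
        Projectivization.mk ℂ v hv = x ∧ ∃ c : ℂ, c ≠ 0 ∧ g v = c • y} = ∅ := by
    intro y hy
    ext x
    simp only [Set.mem_setOf_eq, Set.mem_empty_iff_false, iff_false]
    rintro ⟨v, hv, hmk, c, hc, hgv⟩
    rw [hg v] at hgv
    apply hy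
    funext i
    have := congrFun hgv i
    simp only [Pi.zero_apply, Pi.smul_apply, smul_eq_mul] at this
    rcases mul_eq_zero.mp this.symm with h | h
    · exact absurd h hc
    · exact h
  constructor
  · rintro ⟨U, hU, hcount⟩
    have hopen : IsOpen {y : Fin (m+1) → ℂ | y 0 ≠ 0} :=
      isOpen_ne.preimage (continuous_apply 0)
    obtain ⟨y, hy1, hy2⟩ := hU.exists_mem_open hopen ⟨(fun _ => 1), by simp⟩
    have hyne : y ≠ 0 := fun h => hy2 (by rw [h]; rfl)
    have := hcount y hy1 hyne
    rw [← this, hempty y hyne]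
    simp
  · rintro rfl
    refine ⟨Set.univ, dense_univ, fun y _ hy => ?_⟩
    rw [hempty y hy]
    simp

/-- For `f` homogeneous of degree `k`, the projection
`ρ(x₀:⋯:x_{n+1}) = (x₀:⋯:xₙ)` from `(0:⋯:0:1)` satisfies `ρ ∘ G_F = (∇f) ∘ ρ` as
rational maps (on the level of homogeneous coordinates, `ρ(G_F(v))` equals the scalar
`v_{n+1}` times `∇f(ρ(v))`), and the topological degrees of the Gauss map `G_F` and of
the polar map `∇f` coincide. -/
theorem gauss_map_vs_polar_map {n k : ℕ} (hn : 1 ≤ n) (hk : 1 ≤ k)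
    (f : MvPolynomial (Fin (n+1)) ℂ) (hhom : f.IsHomogeneous k) :
    (∀ v : Fin (n+1+1) → ℂ,
      (gaussVec k f v) ∘ Fin.castSucc
        = v (Fin.last (n+1)) • polarMapVec f (v ∘ Fin.castSucc)) ∧
    (∀ d : ℕ, HasTopDegree (gaussVec k f) d ↔ HasPolarDegree f d) := by
  constructor
  · intro v
    funext i
    simp [gaussVec, Fin.snoc_castSucc]
  intro d
  by_cases hf : f = 0
  · subst hf
    have hpol0 : ∀ v, polarMapVec (0 : MvPolynomial (Fin (n+1)) ℂ) v = 0 := by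
      intro v
      funext i
      simp [polarMapVec]
    have hg0 : ∀ v, gaussVec k (0 : MvPolynomial (Fin (n+1)) ℂ) v = 0 := by
      intro v
      funext u
      refine Fin.lastCases ?_ ?_ u
      · simp [gaussVec]
      · intro i
        simp [gaussVec, polarMapVec]
    have h1 : HasTopDegree (gaussVec k (0 : MvPolynomial (Fin (n+1)) ℂ)) d ↔ d = 0 :=
      hasTopDegree_zero_map hg0 d
    have h2 : HasTopDegree (polarMapVec (0 : MvPolynomial (Fin (n+1)) ℂ)) d ↔ d = 0 :=
      hasTopDegree_zero_map hpol0 d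
    exact h1.trans h2.symm
  -- main case : f ≠ 0
  obtain ⟨Pb, hPb0, hPbvan⟩ : ∃ Pb : MvPolynomial (Fin (n+1)) ℂ, Pb ≠ 0 ∧
      ∀ y' : Fin (n+1) → ℂ, y' ≠ 0 → ∀ v : Fin (n+1) → ℂ, v ≠ 0 → ∀ c : ℂ, c ≠ 0 →
        polarMapVec f v = c • y' → eval v f = 0 → eval y' Pb = 0 := by
    by_cases hk1 : k = 1
    · subst hk1
      set a := polarMapVec f 0 with hadef
      by_cases ha : a = 0
      · refine ⟨1, one_ne_zero, ?_⟩
        intro y' hy' v hv c hc hpol hfv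
        exfalso
        apply hy'
        have hpv : polarMapVec f v = a := polarMapVec_const hhom v
        rw [hpv, ha] at hpol
        funext i
        have := congrFun hpol.symm i
        simp only [Pi.zero_apply, Pi.smul_apply, smul_eq_mul] at this
        rcases mul_eq_zero.mp this with h | h
        · exact absurd h hc
        · exact h
      · obtain ⟨jx, hjx⟩ : ∃ jx, a jx ≠ 0 := by
          by_contra h
          push_neg at h
          exact ha (funext fun i => by rw [h i]; rfl)
        obtain ⟨l, hl⟩ : ∃ l : Fin (n+1), l ≠ jx := by
          apply Fintype.exists_ne_of_one_lt_card
          rw [Fintype.card_fin]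
          omega
        refine ⟨C (a jx) * X l - C (a l) * X jx, ?_, ?_⟩
        · intro h0
          have h1 := congrArg (eval (Pi.single l 1)) h0
          simp only [map_sub, map_mul, eval_C, eval_X, map_zero] at h1
          rw [Pi.single_eq_same, Pi.single_eq_of_ne (Ne.symm hl)] at h1
          simp at h1
          exact hjx h1
        · intro y' hy' v hv c hc hpol hfv
          have hpv : polarMapVec f v = a := polarMapVec_const hhom v
          rw [hpv] at hpol
          have hy'i : ∀ i, y' i = a i / c := by
            intro i
            have := congrFun hpol i
            simp only [Pi.smul_apply, smul_eq_mul] at this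
            field_simp
            linear_combination -this
          simp only [map_sub, map_mul, eval_C, eval_X]
          rw [hy'i l, hy'i jx]
          field_simp
          ring
    · obtain ⟨P, hP0, hvan⟩ := exists_vanishing_on_polar_image hf
      refine ⟨P, hP0, ?_⟩
      intro y' hy' v hv c hc hpol hfv
      obtain ⟨lam, hlam⟩ := IsAlgClosed.exists_pow_nat_eq (k := ℂ) c⁻¹ (n := k-1) (by omega)
      have h1 : eval (lam • v) f = 0 := by
        rw [eval_smul_isHomogeneous hhom, hfv, mul_zero]
      have h2 : polarMapVec f (lam • v) = y' := by
        rw [polarMapVec_smul hhom, hpol, hlam, smul_smul, inv_mul_cancel₀ hc, one_smul]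
      have := hvan (lam • v) h1
      rwa [h2] at this
  set Pt : MvPolynomial (Fin (n+1)) ℂ := Pb * X 0 with hPtdef
  have hPt0 : Pt ≠ 0 := mul_ne_zero hPb0 (X_ne_zero 0)
  have hGood : ∀ y' : Fin (n+1) → ℂ, eval y' Pt ≠ 0 →
      (y' ≠ 0 ∧ ∀ v : Fin (n+1) → ℂ, v ≠ 0 → ∀ c : ℂ, c ≠ 0 →
        polarMapVec f v = c • y' → eval v f ≠ 0) := by
    intro y' hgood
    have hy0 : y' 0 ≠ 0 := by
      intro h
      apply hgood
      rw [hPtdef, map_mul, eval_X, h, mul_zero]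
    have hy' : y' ≠ 0 := fun h => hy0 (by rw [h]; rfl)
    refine ⟨hy', fun v hv c hc hpol => ?_⟩
    intro hfv
    apply hgood
    rw [hPtdef, map_mul, hPbvan y' hy' v hv c hc hpol hfv, zero_mul]
  set PT : MvPolynomial (Fin (n+1+1)) ℂ :=
    (rename Fin.castSucc Pt) * X (Fin.last (n+1)) with hPTdef
  have hPT0 : PT ≠ 0 := by
    apply mul_ne_zero _ (X_ne_zero _)
    intro h
    exact hPt0 ((rename_injective _ (Fin.castSucc_injective _)) (by rw [h, map_zero]))
  have hOmem : ∀ y : Fin (n+1+1) → ℂ, eval y PT ≠ 0 ↔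
      (eval (y ∘ Fin.castSucc) Pt ≠ 0 ∧ y (Fin.last (n+1)) ≠ 0) := by
    intro y
    rw [hPTdef, map_mul, eval_rename, eval_X]
    exact mul_ne_zero_iff
  have hOopen : IsOpen {y : Fin (n+1+1) → ℂ | eval y PT ≠ 0} :=
    isOpen_ne.preimage (MvPolynomial.continuous_eval _)
  have hOdense : Dense {y : Fin (n+1+1) → ℂ | eval y PT ≠ 0} := dense_eval_ne_zero hPT0
  have key : ∀ y : Fin (n+1+1) → ℂ, eval y PT ≠ 0 →
      Nat.card {x : ℙ ℂ (Fin (n+1+1) → ℂ) | ∃ v : Fin (n+1+1) → ℂ, ∃ hv : v ≠ 0,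
        Projectivization.mk ℂ v hv = x ∧ ∃ c : ℂ, c ≠ 0 ∧ gaussVec k f v = c • y} =
      Nat.card {x : ℙ ℂ (Fin (n+1) → ℂ) | ∃ v : Fin (n+1) → ℂ, ∃ hv : v ≠ 0,
        Projectivization.mk ℂ v hv = x ∧ ∃ c : ℂ, c ≠ 0 ∧
          polarMapVec f v = c • (y ∘ Fin.castSucc)} := by
    intro y hy
    obtain ⟨h1, h2⟩ := (hOmem y).mp hy
    obtain ⟨hy'ne, hnobad⟩ := hGood _ h1
    have hsnoc : (Fin.snoc (y ∘ Fin.castSucc) (y (Fin.last (n+1))) : Fin (n+1+1) → ℂ) = y := by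
      funext u
      refine Fin.lastCases ?_ ?_ u
      · simp
      · intro i
        simp
    have := card_fiber_eq hk hhom hy'ne h2 hnobad
    rwa [hsnoc] at this
  constructor
  · rintro ⟨U, hU, hcount⟩
    refine ⟨{y' | ∃ y, (y ∈ U ∧ eval y PT ≠ 0) ∧ y ∘ Fin.castSucc = y'}, ?_, ?_⟩
    · rw [dense_iff_inter_open]
      intro W hW hWne
      have hUO : Dense (U ∩ {y : Fin (n+1+1) → ℂ | eval y PT ≠ 0}) :=
        hU.inter_of_isOpen_right hOdense hOopen
      have hπ : Continuous (fun y : Fin (n+1+1) → ℂ => y ∘ Fin.castSucc) :=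
        continuous_pi (fun i => continuous_apply _)
      obtain ⟨w, hw⟩ := hWne
      have hpre : ((fun y : Fin (n+1+1) → ℂ => y ∘ Fin.castSucc) ⁻¹' W).Nonempty := by
        refine ⟨Fin.snoc w 0, ?_⟩
        simp only [Set.mem_preimage]
        have : (Fin.snoc w (0:ℂ) : Fin (n+1+1) → ℂ) ∘ Fin.castSucc = w := by
          funext i
          simp
        rwa [this]
      obtain ⟨y, hy1, hy2⟩ := hUO.exists_mem_open (hW.preimage hπ) hpre
      exact ⟨y ∘ Fin.castSucc, hy2, y, ⟨hy1.1, hy1.2⟩, rfl⟩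
    · rintro y' ⟨y, ⟨hyU, hyO⟩, hproj⟩ hy'ne
      have h2 := (hOmem y).mp hyO
      have hyne : y ≠ 0 := fun h => h2.2 (by rw [h]; rfl)
      have hd := hcount y hyU hyne
      rw [← hproj, ← hd]
      exact (key y hyO).symm
  · rintro ⟨U', hU', hcount⟩
    refine ⟨{y : Fin (n+1+1) → ℂ | y ∘ Fin.castSucc ∈ U'} ∩
      {y : Fin (n+1+1) → ℂ | eval y PT ≠ 0}, ?_, ?_⟩
    · have hpre : Dense {y : Fin (n+1+1) → ℂ | y ∘ Fin.castSucc ∈ U'} := by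
        rw [Metric.dense_iff]
        intro y r hr
        obtain ⟨u, hu⟩ := Metric.dense_iff.mp hU' (y ∘ Fin.castSucc) r hr
        refine ⟨Fin.snoc u (y (Fin.last (n+1))), ?_, ?_⟩
        · rw [Metric.mem_ball, dist_pi_lt_iff hr]
          intro b
          refine Fin.lastCases ?_ ?_ b
          · simpa using hr
          · intro i
            have := (dist_pi_lt_iff hr).mp (Metric.mem_ball.mp hu.1) i
            simpa using this
        · simp only [Set.mem_setOf_eq]
          have hc : (Fin.snoc u (y (Fin.last (n+1))) : Fin (n+1+1) → ℂ) ∘ Fin.castSucc = u := by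
            funext i
            simp
          rw [hc]
          exact hu.2
      exact hpre.inter_of_isOpen_right hOdense hOopen
    · rintro y ⟨hyU', hyO⟩ hyne
      have h2 := (hOmem y).mp hyO
      have hg := hGood _ h2.1
      have hd := hcount (y ∘ Fin.castSucc) hyU' hg.1
      rw [key y hyO, hd]
end
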